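/- There is an isomorphism of differential Gerstenhaber algebras Υ : dG(g, J) → dG(g, Ω) between the complex-structure DGA of the Kodaira surface and the symplectic DGA, given on generators by T ↦ γ, W ↦ -Δ β', ρ̄ ↦ δ, -(i/2)ω̄ ↦ α'; i.e. Υ is an isomorphism of exterior algebras intertwining the differentials (∂̄ ↦ d) and the brackets. -/

import Mathlib

noncomputable section

/-- A (differential) Gerstenhaber algebra structure on a `ℂ`-algebra `F` whose
multiplication plays the role of the wedge product. -/
structure GA (F : Type*) [Ring F] [Algebra ℂ F] where
  gr : ℕ → Submodule ℂ F
  br : F →ₗ[ℂ] F →ₗ[ℂ] F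
  D : F →ₗ[ℂ] F
  one_mem : (1 : F) ∈ gr 0
  mul_mem : ∀ {i j : ℕ} {a b : F}, a ∈ gr i → b ∈ gr j → a * b ∈ gr (i + j)
  br_mem : ∀ {i j : ℕ} {a b : F}, a ∈ gr i → b ∈ gr j → br a b ∈ gr (i + j - 1)
  D_mem : ∀ {i : ℕ} {a : F}, a ∈ gr i → D a ∈ gr (i + 1)
  gcomm : ∀ {i j : ℕ} {a b : F}, a ∈ gr i → b ∈ gr j →
    a * b = ((-1 : ℂ) ^ (i * j)) • (b * a)
  br_symm : ∀ {i j : ℕ} {a b : F}, a ∈ gr i → b ∈ gr j →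
    br a b = ((-1 : ℂ) ^ (i * j + i + j)) • br b a
  leibniz : ∀ {i j : ℕ} {a b : F} (c : F), a ∈ gr i → b ∈ gr j →
    br (a * b) c = a * br b c + ((-1 : ℂ) ^ (i * j)) • (b * br a c)
  leibniz' : ∀ {i j : ℕ} {a b : F} (c : F), a ∈ gr i → b ∈ gr j →
    br a (b * c) = br a b * c + ((-1 : ℂ) ^ (j + i * j)) • (b * br a c)
  D_mul : ∀ {i : ℕ} {a : F} (b : F), a ∈ gr i →
    D (a * b) = D a * b + ((-1 : ℂ) ^ i) • (a * D b)
  D_D : ∀ a : F, D (D a) = 0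
  D_br : ∀ {i : ℕ} {a : F} (b : F), a ∈ gr i →
    D (br a b) = br (D a) b - ((-1 : ℂ) ^ i) • br a (D b)

/-- The exterior algebra on four degree-one generators. -/
abbrev Lam : Type := ExteriorAlgebra ℂ (Fin 4 → ℂ)

/-- The four degree-one generators. -/
def gen (k : Fin 4) : Lam := ExteriorAlgebra.ι ℂ (Pi.single k (1 : ℂ))

/-- The canonical grading of the exterior algebra. -/
def grE (i : ℕ) : Submodule ℂ Lam :=
  (LinearMap.range (ExteriorAlgebra.ι ℂ : (Fin 4 → ℂ) →ₗ[ℂ] Lam)) ^ i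

open ExteriorAlgebra

private def gmap (Δ : ℂ) : (Fin 4 → ℂ) →ₗ[ℂ] (Fin 4 → ℂ) where
  toFun m := ![2 * Complex.I * m 3, -Δ * m 1, m 0, m 2]
  map_add' m n := by funext i; fin_cases i <;> simp <;> ring
  map_smul' c m := by funext i; fin_cases i <;> simp <;> ring

private def ginv (Δ : ℂ) : (Fin 4 → ℂ) →ₗ[ℂ] (Fin 4 → ℂ) where
  toFun m := ![m 2, -Δ⁻¹ * m 1, m 3, (2 * Complex.I)⁻¹ * m 0]
  map_add' m n := by funext i; fin_cases i <;> simp <;> ring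
  map_smul' c m := by funext i; fin_cases i <;> simp <;> ring

private def Phi (Δ : ℂ) : Lam →ₐ[ℂ] Lam :=
  lift ℂ ⟨(ι ℂ).comp (gmap Δ), fun m => by simp [ι_sq_zero]⟩

private def Psi (Δ : ℂ) : Lam →ₐ[ℂ] Lam :=
  lift ℂ ⟨(ι ℂ).comp (ginv Δ), fun m => by simp [ι_sq_zero]⟩

private lemma Phi_ι (Δ : ℂ) (v : Fin 4 → ℂ) : Phi Δ (ι ℂ v) = ι ℂ (gmap Δ v) := by
  simp [Phi]

set_option linter.unreachableTactic false in
set_option linter.unusedTactic false in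
private def Ups (Δ : ℂ) (hΔ : Δ ≠ 0) : Lam ≃ₐ[ℂ] Lam :=
  AlgEquiv.ofAlgHom (Phi Δ) (Psi Δ)
    (by
      apply ExteriorAlgebra.hom_ext
      refine LinearMap.ext fun v => ?_
      simp only [AlgHom.comp_toLinearMap, LinearMap.coe_comp, Function.comp_apply,
        AlgHom.toLinearMap_apply, AlgHom.coe_id, id_eq, AlgHom.comp_apply]
      rw [show (Psi Δ) (ι ℂ v) = ι ℂ (ginv Δ v) by simp [Psi], Phi_ι]
      congr 1
      have h2I : (2 * Complex.I) ≠ 0 := by simp [Complex.I_ne_zero]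
      funext i; fin_cases i <;> simp [gmap, ginv] <;> field_simp <;>
        first
        | linear_combination (-2 * v 0) * Complex.I_sq
        | linear_combination (-2 * v 3) * Complex.I_sq
        | linear_combination (-v 0) * Complex.I_sq
        | linear_combination (-v 3) * Complex.I_sq)
    (by
      apply ExteriorAlgebra.hom_ext
      refine LinearMap.ext fun v => ?_
      simp only [AlgHom.comp_toLinearMap, LinearMap.coe_comp, Function.comp_apply,
        AlgHom.toLinearMap_apply, AlgHom.coe_id, id_eq, AlgHom.comp_apply]
      rw [Phi_ι, show (Psi Δ) (ι ℂ (gmap Δ v)) = ι ℂ (ginv Δ (gmap Δ v)) by simp [Psi]]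
      congr 1
      have h2I : (2 * Complex.I) ≠ 0 := by simp [Complex.I_ne_zero]
      funext i; fin_cases i <;> simp [gmap, ginv] <;> field_simp <;>
        first
        | linear_combination (-2 * v 0) * Complex.I_sq
        | linear_combination (-2 * v 3) * Complex.I_sq
        | linear_combination (-v 0) * Complex.I_sq
        | linear_combination (-v 3) * Complex.I_sq)

private lemma hι (v : Fin 4 → ℂ) :
    ι ℂ v = v 0 • gen 0 + v 1 • gen 1 + v 2 • gen 2 + v 3 • gen 3 := by
  have h : v = v 0 • (Pi.single 0 1 : Fin 4 → ℂ) + v 1 • (Pi.single 1 1 : Fin 4 → ℂ)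
      + v 2 • (Pi.single 2 1 : Fin 4 → ℂ) + v 3 • (Pi.single 3 1 : Fin 4 → ℂ) := by
    funext i; fin_cases i <;> simp
  rw [h]; simp [gen]

private lemma grE_induction {p : Lam → Prop} (h0 : p 0)
    (hhom : ∀ (i : ℕ) (x : Lam), x ∈ grE i → p x)
    (hadd : ∀ x y, p x → p y → p (x + y)) : ∀ x, p x := by
  intro x
  refine DirectSum.Decomposition.inductionOn (fun i => ⋀[ℂ]^i (Fin 4 → ℂ)) h0 ?_ hadd x
  rintro i ⟨m, hm⟩
  exact hhom i m hm

variable (Δ : ℂ) (hΔ : Δ ≠ 0)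

private lemma Ups_ι (v : Fin 4 → ℂ) : Ups Δ hΔ (ι ℂ v) = ι ℂ (gmap Δ v) := Phi_ι Δ v

private lemma Ups_gen0 : Ups Δ hΔ (gen 0) = gen 2 := by
  rw [gen, Ups_ι, show gmap Δ (Pi.single 0 1) = (Pi.single 2 1 : Fin 4 → ℂ) from by
    funext i; fin_cases i <;> simp [gmap]]; rfl

private lemma Ups_gen1 : Ups Δ hΔ (gen 1) = (-Δ) • gen 1 := by
  rw [gen, Ups_ι, show gmap Δ (Pi.single 1 1) = (-Δ) • (Pi.single 1 1 : Fin 4 → ℂ) from by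
    funext i; fin_cases i <;> simp [gmap], map_smul]

private lemma Ups_gen2 : Ups Δ hΔ (gen 2) = gen 3 := by
  rw [gen, Ups_ι, show gmap Δ (Pi.single 2 1) = (Pi.single 3 1 : Fin 4 → ℂ) from by
    funext i; fin_cases i <;> simp [gmap]]; rfl

private lemma Ups_gen3 : Ups Δ hΔ (gen 3) = (2 * Complex.I) • gen 0 := by
  rw [gen, Ups_ι,
    show gmap Δ (Pi.single 3 1) = (2 * Complex.I) • (Pi.single 0 1 : Fin 4 → ℂ) from by
      funext i; fin_cases i <;> simp [gmap], map_smul]; rfl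

private lemma ι_mem_grE1 (v : Fin 4 → ℂ) : ι ℂ v ∈ grE 1 := by
  rw [grE, pow_one]; exact LinearMap.mem_range_self _ _

private lemma Ups_mem {n : ℕ} {x : Lam} (hx : x ∈ grE n) : Ups Δ hΔ x ∈ grE n := by
  rw [grE] at hx ⊢
  induction hx using Submodule.pow_induction_on_left' with
  | algebraMap r => rw [AlgEquiv.commutes]; exact Submodule.algebraMap_mem r
  | add x y i hx hy ihx ihy => rw [map_add]; exact add_mem ihx ihy
  | mem_mul m hm i x hx ih =>
      obtain ⟨v, rfl⟩ := hm
      rw [map_mul, Ups_ι, pow_succ']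
      exact Submodule.mul_mem_mul (LinearMap.mem_range_self _ _) ih

set_option maxHeartbeats 1000000 in
theorem stmt19
    (G1 G2 : GA Lam)
    (hgr1 : G1.gr = grE) (hgr2 : G2.gr = grE)
    (T W ρ ω : Lam)
    (hT : T = gen 0) (hW : W = gen 1) (hρ : ρ = gen 2) (hω : ω = gen 3)
    -- generating data for the complex-structure DGA
    (h1Tρ : G1.br T ρ = (-(Complex.I)/2) • ω)
    (h1TT : G1.br T T = 0) (h1TW : G1.br T W = 0) (h1Tω : G1.br T ω = 0)
    (h1WW : G1.br W W = 0) (h1Wρ : G1.br W ρ = 0) (h1Wω : G1.br W ω = 0)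
    (h1ρρ : G1.br ρ ρ = 0) (h1ρω : G1.br ρ ω = 0) (h1ωω : G1.br ω ω = 0)
    (h1DT : G1.D T = (-(Complex.I)/2) • (ω * W))
    (h1DW : G1.D W = 0) (h1Dρ : G1.D ρ = 0) (h1Dω : G1.D ω = 0)
    (u1 v1 u2 v2 : ℝ) (Δ : ℂ)
    (hΔdef : Δ = ((u1 ^ 2 + v1 ^ 2 - u2 ^ 2 - v2 ^ 2 : ℝ) : ℂ)) (hΔ : Δ ≠ 0)
    (α' β' γ δ : Lam)
    (hα' : α' = gen 0) (hβ' : β' = gen 1) (hγ : γ = gen 2) (hδ : δ = gen 3)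
    -- generating data for the symplectic DGA
    (h2γδ : G2.br γ δ = α')
    (h2αα : G2.br α' α' = 0) (h2αβ : G2.br α' β' = 0) (h2αγ : G2.br α' γ = 0)
    (h2αδ : G2.br α' δ = 0) (h2ββ : G2.br β' β' = 0) (h2βγ : G2.br β' γ = 0)
    (h2βδ : G2.br β' δ = 0) (h2γγ : G2.br γ γ = 0) (h2δδ : G2.br δ δ = 0)
    (h2Dγ : G2.D γ = -(Δ • (α' * β')))
    (h2Dα : G2.D α' = 0) (h2Dβ : G2.D β' = 0) (h2Dδ : G2.D δ = 0) :
    ∃ Υ : Lam ≃ₐ[ℂ] Lam,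
      Υ T = γ ∧ Υ W = (-Δ) • β' ∧ Υ ρ = δ ∧ Υ ((-(Complex.I)/2) • ω) = α' ∧
      (∀ x : Lam, Υ (G1.D x) = G2.D (Υ x)) ∧
      (∀ x y : Lam, Υ (G1.br x y) = G2.br (Υ x) (Υ y)) := by
  subst hT hW hρ hω hα' hβ' hγ hδ
  -- membership helpers
  have mem1 : ∀ {n : ℕ} {x : Lam}, x ∈ grE n → x ∈ G1.gr n := by
    intro n x hx; rw [hgr1]; exact hx
  have mem2 : ∀ {n : ℕ} {x : Lam}, x ∈ grE n → x ∈ G2.gr n := by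
    intro n x hx; rw [hgr2]; exact hx
  have hg1 : ∀ k : Fin 4, gen k ∈ G1.gr 1 := fun k => mem1 (ι_mem_grE1 _)
  have hg2 : ∀ k : Fin 4, gen k ∈ G2.gr 1 := fun k => mem2 (ι_mem_grE1 _)
  have hι1 : ∀ v : Fin 4 → ℂ, ι ℂ v ∈ G1.gr 1 := fun v => mem1 (ι_mem_grE1 v)
  have hι2 : ∀ v : Fin 4 → ℂ, Ups Δ hΔ (ι ℂ v) ∈ G2.gr 1 := fun v => by
    rw [Ups_ι]; exact mem2 (ι_mem_grE1 _)
  -- D kills 1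
  have D1one : G1.D 1 = 0 := by
    have h := G1.D_mul (1 : Lam) G1.one_mem
    simp only [one_mul, mul_one, pow_zero, one_smul] at h
    exact (left_eq_add.mp h)
  have D2one : G2.D 1 = 0 := by
    have h := G2.D_mul (1 : Lam) G2.one_mem
    simp only [one_mul, mul_one, pow_zero, one_smul] at h
    exact (left_eq_add.mp h)
  -- brackets with 1 vanish
  have br1one : ∀ c : Lam, G1.br 1 c = 0 := by
    intro c
    have h := G1.leibniz c G1.one_mem G1.one_mem
    simp only [one_mul, Nat.mul_zero, pow_zero, one_smul] at h
    exact (left_eq_add.mp h)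
  have br2one : ∀ c : Lam, G2.br 1 c = 0 := by
    intro c
    have h := G2.leibniz c G2.one_mem G2.one_mem
    simp only [one_mul, Nat.mul_zero, pow_zero, one_smul] at h
    exact (left_eq_add.mp h)
  -- antisymmetry in degree one
  have s1 : ∀ a b : Lam, a ∈ G1.gr 1 → b ∈ G1.gr 1 → G1.br a b = -G1.br b a := by
    intro a b ha hb
    rw [G1.br_symm ha hb]; norm_num
  have s2 : ∀ a b : Lam, a ∈ G2.gr 1 → b ∈ G2.gr 1 → G2.br a b = -G2.br b a := by
    intro a b ha hb
    rw [G2.br_symm ha hb]; norm_num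
  -- derived bracket values
  have h1WT : G1.br (gen 1) (gen 0) = 0 := by rw [s1 _ _ (hg1 1) (hg1 0), h1TW, neg_zero]
  have h1ρT : G1.br (gen 2) (gen 0) = -((-(Complex.I)/2) • gen 3) := by
    rw [s1 _ _ (hg1 2) (hg1 0), h1Tρ]
  have h1ρW : G1.br (gen 2) (gen 1) = 0 := by rw [s1 _ _ (hg1 2) (hg1 1), h1Wρ, neg_zero]
  have h1ωT : G1.br (gen 3) (gen 0) = 0 := by rw [s1 _ _ (hg1 3) (hg1 0), h1Tω, neg_zero]
  have h1ωW : G1.br (gen 3) (gen 1) = 0 := by rw [s1 _ _ (hg1 3) (hg1 1), h1Wω, neg_zero]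
  have h1ωρ : G1.br (gen 3) (gen 2) = 0 := by rw [s1 _ _ (hg1 3) (hg1 2), h1ρω, neg_zero]
  have h2βα : G2.br (gen 1) (gen 0) = 0 := by rw [s2 _ _ (hg2 1) (hg2 0), h2αβ, neg_zero]
  have h2γα : G2.br (gen 2) (gen 0) = 0 := by rw [s2 _ _ (hg2 2) (hg2 0), h2αγ, neg_zero]
  have h2γβ : G2.br (gen 2) (gen 1) = 0 := by rw [s2 _ _ (hg2 2) (hg2 1), h2βγ, neg_zero]
  have h2δα : G2.br (gen 3) (gen 0) = 0 := by rw [s2 _ _ (hg2 3) (hg2 0), h2αδ, neg_zero]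
  have h2δβ : G2.br (gen 3) (gen 1) = 0 := by rw [s2 _ _ (hg2 3) (hg2 1), h2βδ, neg_zero]
  have h2δγ : G2.br (gen 3) (gen 2) = -gen 0 := by rw [s2 _ _ (hg2 3) (hg2 2), h2γδ]
  -- generator-level intertwining of D
  have keyDι : ∀ v : Fin 4 → ℂ,
      Ups Δ hΔ (G1.D (ι ℂ v)) = G2.D (Ups Δ hΔ (ι ℂ v)) := by
    intro v
    have l : G1.D (ι ℂ v) = v 0 • ((-(Complex.I)/2) • (gen 3 * gen 1)) := by
      rw [hι]
      simp [h1DT, h1DW, h1Dρ, h1Dω]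
    have r : G2.D (ι ℂ (gmap Δ v)) = v 0 • -(Δ • (gen 0 * gen 1)) := by
      rw [hι]
      simp [gmap, h2Dγ, h2Dα, h2Dβ, h2Dδ]
    rw [l, Ups_ι, r]
    simp only [map_smul, map_mul, Ups_gen3, Ups_gen1, smul_mul_assoc, mul_smul_comm, smul_smul]
    match_scalars <;>
      (ring_nf; try simp only [Complex.I_sq, Complex.I_mul_I]; try ring_nf)
  -- generator-level intertwining of the bracket
  have keyBrι : ∀ v w : Fin 4 → ℂ,
      Ups Δ hΔ (G1.br (ι ℂ v) (ι ℂ w)) = G2.br (Ups Δ hΔ (ι ℂ v)) (Ups Δ hΔ (ι ℂ w)) := by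
    have gc : ∀ u : Fin 4 → ℂ, ι ℂ (gmap Δ u) =
        (2 * Complex.I * u 3) • gen 0 + (-Δ * u 1) • gen 1 + u 0 • gen 2 + u 2 • gen 3 := by
      intro u
      rw [hι]
      norm_num [gmap]
      rfl
    intro v w
    rw [Ups_ι, Ups_ι, gc v, gc w, hι v, hι w]
    simp only [map_add, map_smul, LinearMap.add_apply, LinearMap.smul_apply,
      h1Tρ, h1TT, h1TW, h1Tω, h1WW, h1Wρ, h1Wω, h1ρρ, h1ρω, h1ωω, h1WT, h1ρT, h1ρW,
      h1ωT, h1ωW, h1ωρ,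
      h2γδ, h2αα, h2αβ, h2αγ, h2αδ, h2ββ, h2βγ, h2βδ, h2γγ, h2δδ, h2βα, h2γα, h2γβ,
      h2δα, h2δβ, h2δγ,
      smul_zero, add_zero, zero_add, smul_neg, smul_smul, map_neg, map_smul, map_zero,
      Ups_gen3]
    match_scalars <;>
      (ring_nf; try simp only [Complex.I_sq, Complex.I_mul_I]; try ring_nf)
  -- full intertwining of D
  have keyD : ∀ x : Lam, Ups Δ hΔ (G1.D x) = G2.D (Ups Δ hΔ x) := by
    refine grE_induction (by simp) ?_ ?_
    · intro n x hx
      rw [grE] at hx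
      refine Submodule.pow_induction_on_left _ ?_ ?_ ?_ hx
      · intro r
        simp [Algebra.algebraMap_eq_smul_one, map_smul, D1one, D2one]
      · intro a b ha hb
        simp [map_add, ha, hb]
      · rintro m ⟨u, rfl⟩ x ihx
        rw [G1.D_mul x (hι1 u), map_mul, G2.D_mul (Ups Δ hΔ x) (hι2 u)]
        simp only [map_add, map_smul, map_mul, pow_one, keyDι, ihx]
    · intro a b ha hb
      simp [map_add, ha, hb]
  -- intertwining of the bracket against a degree-one second argument
  have key6 : ∀ (w : Fin 4 → ℂ) (x : Lam),
      Ups Δ hΔ (G1.br x (ι ℂ w)) = G2.br (Ups Δ hΔ x) (Ups Δ hΔ (ι ℂ w)) := by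
    intro w
    refine grE_induction (by simp) ?_ ?_
    · intro j x hx
      rw [grE] at hx
      induction hx using Submodule.pow_induction_on_left' with
      | algebraMap r =>
          simp [Algebra.algebraMap_eq_smul_one, map_smul, LinearMap.smul_apply,
            br1one, br2one]
      | add x y i hx hy ihx ihy =>
          simp only [map_add, LinearMap.add_apply, ihx, ihy]
      | mem_mul m hm i x hx ih =>
          obtain ⟨u, rfl⟩ := hm
          rw [G1.leibniz (ι ℂ w) (hι1 u) (mem1 hx), map_mul,
            G2.leibniz (Ups Δ hΔ (ι ℂ w)) (hι2 u) (mem2 (Ups_mem Δ hΔ hx))]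
          simp only [map_add, map_smul, map_mul, ih, keyBrι]
    · intro a b ha hb
      simp only [map_add, LinearMap.add_apply, ha, hb]
  -- intertwining of the bracket for a fixed homogeneous first argument
  have key7 : ∀ (i : ℕ) (x : Lam), x ∈ grE i →
      ∀ y : Lam, Ups Δ hΔ (G1.br x y) = G2.br (Ups Δ hΔ x) (Ups Δ hΔ y) := by
    intro i x hxi
    have hx1 : x ∈ G1.gr i := mem1 hxi
    have hx2 : Ups Δ hΔ x ∈ G2.gr i := mem2 (Ups_mem Δ hΔ hxi)
    have brx1 : G1.br x 1 = 0 := by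
      rw [G1.br_symm hx1 G1.one_mem, br1one, smul_zero]
    have brx2 : G2.br (Ups Δ hΔ x) 1 = 0 := by
      rw [G2.br_symm hx2 G2.one_mem, br2one, smul_zero]
    refine grE_induction (by simp) ?_ ?_
    · intro n y hy
      rw [grE] at hy
      induction hy using Submodule.pow_induction_on_left' with
      | algebraMap r =>
          simp [Algebra.algebraMap_eq_smul_one, map_smul, brx1, brx2]
      | add a b n ha hb iha ihb =>
          simp only [map_add, iha, ihb]
      | mem_mul m hm n y hy ih =>
          obtain ⟨u, rfl⟩ := hm
          rw [G1.leibniz' y hx1 (hι1 u), map_mul,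
            G2.leibniz' (Ups Δ hΔ y) hx2 (hι2 u)]
          simp only [map_add, map_smul, map_mul, ih, key6]
    · intro a b ha hb
      simp only [map_add, ha, hb]
  -- full intertwining of the bracket
  have keyBr : ∀ x y : Lam, Ups Δ hΔ (G1.br x y) = G2.br (Ups Δ hΔ x) (Ups Δ hΔ y) := by
    intro x y
    refine grE_induction (p := fun x : Lam =>
        Ups Δ hΔ (G1.br x y) = G2.br (Ups Δ hΔ x) (Ups Δ hΔ y)) (by simp) ?_ ?_ x
    · intro i x hx
      exact key7 i x hx y
    · intro a b ha hb
      simp only [map_add, LinearMap.add_apply, ha, hb]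
  refine ⟨Ups Δ hΔ, Ups_gen0 Δ hΔ, Ups_gen1 Δ hΔ, Ups_gen2 Δ hΔ, ?_, keyD, keyBr⟩
  rw [map_smul, Ups_gen3, smul_smul,
    show (-(Complex.I)/2) * (2 * Complex.I) = 1 from by
      linear_combination (-1 : ℂ) * Complex.I_sq, one_smul]

end
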